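/- For a formal power series A(x) with zero constant term and A'(0)=1, setting B(x) to be the compositional inverse of x/(1+A(x)), one has B(x) = A(x) if and only if A(A(x)) = (A(x) - x)/x. -/

import Mathlib

/-- Composition `f ∘ g` (i.e. `f(g(x))`) of formal power series, valid when `g`
has zero constant term. -/
noncomputable def psComp {R : Type*} [CommSemiring R] (f g : PowerSeries R) : PowerSeries R :=
  PowerSeries.mk fun n =>
    ∑ k ∈ Finset.range (n + 1), PowerSeries.coeff k f * PowerSeries.coeff n (g ^ k)

open PowerSeries Finset

namespace RevRecAux

lemma coeff_psComp (f g : PowerSeries ℚ) (n : ℕ) :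
    coeff n (psComp f g) = ∑ k ∈ range (n + 1), coeff k f * coeff n (g ^ k) := by
  simp [psComp]

lemma coeff_pow_zero {g : PowerSeries ℚ} (hg : constantCoeff g = 0)
    {k n : ℕ} (h : n < k) : coeff n (g ^ k) = 0 := by
  have hdvd : (X : PowerSeries ℚ) ^ k ∣ g ^ k :=
    pow_dvd_pow_of_dvd (X_dvd_iff.mpr hg) k
  obtain ⟨u, hu⟩ := hdvd
  exact X_pow_dvd_iff.mp ⟨u, hu⟩ n h

lemma psComp_add (f₁ f₂ g : PowerSeries ℚ) :
    psComp (f₁ + f₂) g = psComp f₁ g + psComp f₂ g := by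
  ext n
  simp [coeff_psComp, add_mul, Finset.sum_add_distrib]

lemma psComp_one (g : PowerSeries ℚ) : psComp 1 g = 1 := by
  ext n
  rw [coeff_psComp, Finset.sum_eq_single 0]
  · simp
  · intro k _ hk0
    simp [PowerSeries.coeff_one, hk0]
  · simp

lemma psComp_X (g : PowerSeries ℚ) (hg : constantCoeff g = 0) :
    psComp X g = g := by
  ext n
  rw [coeff_psComp, Finset.sum_eq_single 1]
  · simp
  · intro k _ hk1
    simp [PowerSeries.coeff_X, hk1]
  · intro h1
    have hn : n = 0 := by simpa using h1
    subst hn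
    simp [PowerSeries.coeff_X, hg]

lemma constantCoeff_psComp (f g : PowerSeries ℚ) :
    constantCoeff (psComp f g) = constantCoeff f := by
  have := coeff_psComp f g 0
  simpa using this

lemma psComp_mul (f₁ f₂ g : PowerSeries ℚ) (hg : constantCoeff g = 0) :
    psComp (f₁ * f₂) g = psComp f₁ g * psComp f₂ g := by
  ext n
  have T : ℚ := 0
  -- common form
  set F : ℕ × ℕ → ℚ := fun p => coeff p.1 f₁ * coeff p.2 f₂ * coeff n (g ^ (p.1 + p.2))
    with hF
  have hFzero : ∀ p : ℕ × ℕ, n < p.1 + p.2 → F p = 0 := by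
    intro p hp
    simp [hF, coeff_pow_zero hg hp]
  have lhs_eq : coeff n (psComp (f₁ * f₂) g) = ∑ p ∈ range (n+1) ×ˢ range (n+1), F p := by
    rw [coeff_psComp]
    have e1 : ∀ k ∈ range (n+1),
        coeff k (f₁ * f₂) * coeff n (g ^ k) = ∑ p ∈ Finset.HasAntidiagonal.antidiagonal k, F p := by
      intro k _
      rw [PowerSeries.coeff_mul, Finset.sum_mul]
      refine Finset.sum_congr rfl fun p hp => ?_
      have hpk : p.1 + p.2 = k := Finset.HasAntidiagonal.mem_antidiagonal.mp hp
      rw [hF]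
      simp only []
      rw [hpk]
    rw [Finset.sum_congr rfl e1]
    rw [← Finset.sum_biUnion]
    · apply Finset.sum_subset
      · intro p hp
        simp only [Finset.mem_biUnion, mem_range, Finset.HasAntidiagonal.mem_antidiagonal] at hp
        obtain ⟨k, hk, hpk⟩ := hp
        simp only [Finset.mem_product, mem_range]
        omega
      · intro p _ hnp
        apply hFzero
        simp only [Finset.mem_biUnion, mem_range, Finset.HasAntidiagonal.mem_antidiagonal] at hnp
        by_contra hc
        push_neg at hc
        exact hnp ⟨p.1 + p.2, by omega, rfl⟩
    · intro x hx y hy hxy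
      simp only [Finset.disjoint_left]
      intro p hpx hpy
      rw [Finset.mem_coe, mem_range] at hx hy
      have h1 : p.1 + p.2 = x := Finset.HasAntidiagonal.mem_antidiagonal.mp hpx
      have h2 : p.1 + p.2 = y := Finset.HasAntidiagonal.mem_antidiagonal.mp hpy
      exact hxy (h1 ▸ h2)
  have rhs_eq : coeff n (psComp f₁ g * psComp f₂ g)
      = ∑ p ∈ range (n+1) ×ˢ range (n+1), F p := by
    rw [PowerSeries.coeff_mul]
    have e1 : ∀ p ∈ Finset.HasAntidiagonal.antidiagonal n,
        coeff p.1 (psComp f₁ g) * coeff p.2 (psComp f₂ g)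
        = ∑ q ∈ range (n+1) ×ˢ range (n+1),
            (coeff q.1 f₁ * coeff p.1 (g ^ q.1)) *
            (coeff q.2 f₂ * coeff p.2 (g ^ q.2)) := by
      intro p hp
      have hpn : p.1 + p.2 = n := Finset.HasAntidiagonal.mem_antidiagonal.mp hp
      rw [coeff_psComp, coeff_psComp]
      have s1 : (∑ i ∈ range (p.1 + 1), coeff i f₁ * coeff p.1 (g ^ i))
          = ∑ i ∈ range (n + 1), coeff i f₁ * coeff p.1 (g ^ i) := by
        apply Finset.sum_subset (Finset.range_subset_range.mpr (by omega))
        intro i _ hi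
        rw [mem_range, not_lt] at hi
        rw [coeff_pow_zero hg (by omega), mul_zero]
      have s2 : (∑ j ∈ range (p.2 + 1), coeff j f₂ * coeff p.2 (g ^ j))
          = ∑ j ∈ range (n + 1), coeff j f₂ * coeff p.2 (g ^ j) := by
        apply Finset.sum_subset (Finset.range_subset_range.mpr (by omega))
        intro j _ hj
        rw [mem_range, not_lt] at hj
        rw [coeff_pow_zero hg (by omega), mul_zero]
      rw [s1, s2, Finset.sum_mul_sum, ← Finset.sum_product']
    rw [Finset.sum_congr rfl e1, Finset.sum_comm]
    refine Finset.sum_congr rfl fun q _ => ?_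
    have : (∑ p ∈ Finset.HasAntidiagonal.antidiagonal n,
        (coeff q.1 f₁ * coeff p.1 (g ^ q.1)) * (coeff q.2 f₂ * coeff p.2 (g ^ q.2)))
        = coeff q.1 f₁ * coeff q.2 f₂ *
          ∑ p ∈ Finset.HasAntidiagonal.antidiagonal n, coeff p.1 (g ^ q.1) * coeff p.2 (g ^ q.2) := by
      rw [Finset.mul_sum]
      exact Finset.sum_congr rfl fun p _ => by ring
    rw [this, ← PowerSeries.coeff_mul, ← pow_add]
  rw [lhs_eq, rhs_eq]

lemma coeff_pow_congr {B A : PowerSeries ℚ} {m : ℕ}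
    (h : ∀ i ≤ m, coeff i B = coeff i A) (k : ℕ) :
    ∀ j ≤ m, coeff j (B ^ k) = coeff j (A ^ k) := by
  induction k with
  | zero => simp
  | succ k ih =>
    intro j hj
    rw [pow_succ, pow_succ, PowerSeries.coeff_mul, PowerSeries.coeff_mul]
    refine Finset.sum_congr rfl fun p hp => ?_
    have hpj : p.1 + p.2 = j := Finset.HasAntidiagonal.mem_antidiagonal.mp hp
    rw [ih p.1 (by omega), h p.2 (by omega)]

lemma psComp_coeff_congr {B A : PowerSeries ℚ} {m : ℕ}
    (h : ∀ i ≤ m, coeff i B = coeff i A) (f : PowerSeries ℚ) :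
    coeff m (psComp f B) = coeff m (psComp f A) := by
  rw [coeff_psComp, coeff_psComp]
  exact Finset.sum_congr rfl fun k _ => by rw [coeff_pow_congr h k m le_rfl]

end RevRecAux

open RevRecAux

/-- For `A` with zero constant term and linear coefficient `1`, if `B` is the
compositional inverse of `x/(1+A(x))`, then `B = A` iff `A(A(x)) = (A(x)-x)/x`. -/
theorem revertReciprocal_fixed_iff_eigenseries (A B : PowerSeries ℚ)
    (h0 : PowerSeries.constantCoeff A = 0) (h1 : PowerSeries.coeff 1 A = 1)
    (hBl : psComp B (PowerSeries.X * (1 + A)⁻¹) = PowerSeries.X)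
    (hBr : psComp (PowerSeries.X * (1 + A)⁻¹) B = PowerSeries.X) :
    B = A ↔ PowerSeries.X * psComp A A = A - PowerSeries.X := by
  have hc1 : constantCoeff (1 + A) ≠ 0 := by simp [h0]
  have hinv : (1 + A)⁻¹ * (1 + A) = 1 := PowerSeries.inv_mul_cancel _ hc1
  have hU : (X * (1 + A)⁻¹) * (1 + A) = X := by
    rw [mul_assoc, hinv, mul_one]
  have key : ∀ C : PowerSeries ℚ, constantCoeff C = 0 →
      psComp (X * (1 + A)⁻¹) C * (1 + psComp A C) = C := by
    intro C hC
    have h1' : (1 : PowerSeries ℚ) + psComp A C = psComp (1 + A) C := by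
      rw [psComp_add, psComp_one]
    rw [h1', ← psComp_mul _ _ _ hC, hU, psComp_X _ hC]
  constructor
  · intro hBA
    subst hBA
    have hk := key B h0
    rw [hBr] at hk
    linear_combination hk
  · intro h
    have hB0 : constantCoeff B = 0 := by
      have := congrArg (constantCoeff) hBl
      rwa [constantCoeff_psComp, PowerSeries.constantCoeff_X] at this
    have hk := key B hB0
    rw [hBr] at hk
    -- hk : X * (1 + psComp A B) = B
    have hBeq : B = X + X * psComp A B := by linear_combination -hk
    have hAeq : A = X + X * psComp A A := by linear_combination -h
    have main : ∀ n, coeff n B = coeff n A := by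
      intro n
      induction n using Nat.strong_induction_on with
      | _ n ih =>
        match n with
        | 0 => simp [PowerSeries.coeff_zero_eq_constantCoeff, hB0, h0]
        | m + 1 =>
          have hcongr : coeff m (psComp A B) = coeff m (psComp A A) :=
            psComp_coeff_congr (fun i hi => ih i (by omega)) A
          calc coeff (m+1) B = coeff (m+1) (X + X * psComp A B) := by rw [← hBeq]
            _ = coeff (m+1) X + coeff m (psComp A B) := by
                rw [map_add, PowerSeries.coeff_succ_X_mul]
            _ = coeff (m+1) X + coeff m (psComp A A) := by rw [hcongr]
            _ = coeff (m+1) (X + X * psComp A A) := by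
                rw [map_add, PowerSeries.coeff_succ_X_mul]
            _ = coeff (m+1) A := by rw [← hAeq]
    exact PowerSeries.ext main
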